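/- Let n ≥ 1, let Pₙ be the path graph on vertices Δ = {α₁,…,αₙ}, and let J₀ ⊆ Δ. A nonempty admissible subset U ∈ Λ*(Pₙ,J₀) is join-irreducible in the lattice Λ*(Pₙ,J₀) if and only if one of the following holds: (a) U = {β} for a single vertex β ∈ Δ − J₀; or (b) U = A ∪ {β}, where β ∈ Δ − J₀, A is a nonempty connected subset of J₀, and there exists α ∈ A adjacent to β in Pₙ. -/

import Mathlib

open SimpleGraph Finset

/-- `ReachIn G U a b` : `b` is reachable from `a` within the subgraph of `G`
induced on the vertex set `U`. -/
def ReachIn {n : ℕ} (G : SimpleGraph (Fin n)) (U : Finset (Fin n)) (a b : Fin n) : Prop :=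
  Relation.ReflTransGen (fun x y => G.Adj x y ∧ x ∈ U ∧ y ∈ U) a b

/-- `U` is admissible (with respect to `J₀`) if no connected component of the
subgraph of `G` induced on `U` is entirely contained in `J₀`: every component
contains a vertex outside `J₀`. -/
def Admissible {n : ℕ} (G : SimpleGraph (Fin n)) (J₀ U : Finset (Fin n)) : Prop :=
  ∀ a ∈ U, ∃ b, ReachIn G U a b ∧ b ∉ J₀

/-- A subset `A` is connected if the induced subgraph on `A` is connected. -/
def ConnIn {n : ℕ} (G : SimpleGraph (Fin n)) (A : Finset (Fin n)) : Prop :=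
  ∀ a ∈ A, ∀ b ∈ A, ReachIn G A a b

theorem ReachIn.mono {n : ℕ} {G : SimpleGraph (Fin n)} {U V : Finset (Fin n)} (h : U ⊆ V)
    {a b : Fin n} (hr : ReachIn G U a b) : ReachIn G V a b := by
  unfold ReachIn at hr ⊢
  exact hr.lift id (fun x y hxy => ⟨hxy.1, h hxy.2.1, h hxy.2.2⟩)

theorem admissible_empty {n : ℕ} (G : SimpleGraph (Fin n)) (J₀ : Finset (Fin n)) :
    Admissible G J₀ ∅ := fun a ha => absurd ha (Finset.notMem_empty a)

theorem admissible_union {n : ℕ} {G : SimpleGraph (Fin n)} {J₀ U V : Finset (Fin n)}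
    (hU : Admissible G J₀ U) (hV : Admissible G J₀ V) : Admissible G J₀ (U ∪ V) := by
  intro a ha
  rcases Finset.mem_union.mp ha with h | h
  · obtain ⟨b, hb, hbJ⟩ := hU a h
    exact ⟨b, hb.mono Finset.subset_union_left, hbJ⟩
  · obtain ⟨b, hb, hbJ⟩ := hV a h
    exact ⟨b, hb.mono Finset.subset_union_right, hbJ⟩

/-- `Λ*(G, J₀)` : the poset of admissible subsets, ordered by inclusion. -/
def CrossSection {n : ℕ} (G : SimpleGraph (Fin n)) (J₀ : Finset (Fin n)) : Type :=
  {U : Finset (Fin n) // Admissible G J₀ U}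

namespace CrossSection

variable {n : ℕ} {G : SimpleGraph (Fin n)} {J₀ : Finset (Fin n)}

instance : PartialOrder (CrossSection G J₀) :=
  inferInstanceAs (PartialOrder {U : Finset (Fin n) // Admissible G J₀ U})

instance : DecidableEq (CrossSection G J₀) :=
  inferInstanceAs (DecidableEq {U : Finset (Fin n) // Admissible G J₀ U})

noncomputable instance : Fintype (CrossSection G J₀) :=
  Fintype.ofInjective (Subtype.val : CrossSection G J₀ → Finset (Fin n)) Subtype.val_injective

open Classical in
/-- The underlying set of the meet of two admissible sets: the largest admissible
subset contained in the intersection. -/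
noncomputable def meetFinset (G : SimpleGraph (Fin n)) (J₀ : Finset (Fin n))
    (U V : Finset (Fin n)) : Finset (Fin n) :=
  ((U ∩ V).powerset.filter (fun W => Admissible G J₀ W)).sup id

theorem admissible_sup {s : Finset (Finset (Fin n))}
    (h : ∀ W ∈ s, Admissible G J₀ W) : Admissible G J₀ (s.sup id) :=
  Finset.sup_induction (by simpa using admissible_empty G J₀)
    (fun a ha b hb => by simpa using admissible_union ha hb) h

theorem admissible_meetFinset (G : SimpleGraph (Fin n)) (J₀ U V : Finset (Fin n)) :
    Admissible G J₀ (meetFinset G J₀ U V) := by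
  classical
  exact admissible_sup (fun W hW => (Finset.mem_filter.mp hW).2)

theorem meetFinset_subset_left (G : SimpleGraph (Fin n)) (J₀ U V : Finset (Fin n)) :
    meetFinset G J₀ U V ≤ U := by
  classical
  unfold meetFinset
  refine Finset.sup_le (fun W hW => ?_)
  have := Finset.mem_powerset.mp (Finset.mem_filter.mp hW).1
  exact fun x hx => (Finset.mem_inter.mp (this hx)).1

theorem meetFinset_subset_right (G : SimpleGraph (Fin n)) (J₀ U V : Finset (Fin n)) :
    meetFinset G J₀ U V ≤ V := by
  classical
  unfold meetFinset
  refine Finset.sup_le (fun W hW => ?_)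
  have := Finset.mem_powerset.mp (Finset.mem_filter.mp hW).1
  exact fun x hx => (Finset.mem_inter.mp (this hx)).2

theorem subset_meetFinset {G : SimpleGraph (Fin n)} {J₀ U V W : Finset (Fin n)}
    (hW : Admissible G J₀ W) (h1 : W ⊆ U) (h2 : W ⊆ V) : W ≤ meetFinset G J₀ U V := by
  classical
  unfold meetFinset
  exact Finset.le_sup (f := id)
    (Finset.mem_filter.mpr ⟨Finset.mem_powerset.mpr (Finset.subset_inter h1 h2), hW⟩)

noncomputable instance : Lattice (CrossSection G J₀) :=
  { (inferInstance : PartialOrder (CrossSection G J₀)) with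
    sup := fun U V => ⟨U.1 ∪ V.1, admissible_union U.2 V.2⟩
    le_sup_left := fun U V => show U.1 ⊆ U.1 ∪ V.1 from Finset.subset_union_left
    le_sup_right := fun U V => show V.1 ⊆ U.1 ∪ V.1 from Finset.subset_union_right
    sup_le := fun U V W h1 h2 => show U.1 ∪ V.1 ⊆ W.1 from Finset.union_subset h1 h2
    inf := fun U V => ⟨meetFinset G J₀ U.1 V.1, admissible_meetFinset G J₀ U.1 V.1⟩
    inf_le_left := fun U V => meetFinset_subset_left G J₀ U.1 V.1
    inf_le_right := fun U V => meetFinset_subset_right G J₀ U.1 V.1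
    le_inf := fun W U V h1 h2 => subset_meetFinset W.2 h1 h2 }

instance : OrderBot (CrossSection G J₀) where
  bot := ⟨∅, admissible_empty G J₀⟩
  bot_le := fun U => show (∅ : Finset (Fin n)) ⊆ U.1 from Finset.empty_subset _

@[simp] theorem sup_val (U V : CrossSection G J₀) : (U ⊔ V).1 = U.1 ∪ V.1 := rfl

@[simp] theorem inf_val (U V : CrossSection G J₀) : (U ⊓ V).1 = meetFinset G J₀ U.1 V.1 := rfl

end CrossSection


section Aux
variable {n : ℕ} {U : Finset (Fin n)}

theorem reach_mem {a b : Fin n} (ha : a ∈ U) (h : ReachIn (pathGraph n) U a b) : b ∈ U := by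
  induction h with
  | refl => exact ha
  | tail _ step _ => exact step.2.2

theorem reach_symm {a b : Fin n} (h : ReachIn (pathGraph n) U a b) :
    ReachIn (pathGraph n) U b a := by
  unfold ReachIn at h ⊢
  induction h with
  | refl => exact Relation.ReflTransGen.refl
  | tail _ step ih => exact Relation.ReflTransGen.head ⟨step.1.symm, step.2.2, step.2.1⟩ ih

/-- L1 : everything between the ends of a reach chain is in U. -/
theorem reach_between {a b : Fin n} (ha : a ∈ U) (h : ReachIn (pathGraph n) U a b)
    (c : Fin n) (hc : (a.val ≤ c.val ∧ c.val ≤ b.val) ∨ (b.val ≤ c.val ∧ c.val ≤ a.val)) :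
    c ∈ U := by
  induction h with
  | refl =>
    have : c = a := Fin.ext (by omega)
    exact this ▸ ha
  | @tail b b' hab step ih =>
    have hadj := pathGraph_adj.mp step.1
    by_cases hcb : c.val = b'.val
    · exact (Fin.ext hcb : c = b') ▸ step.2.2
    · exact ih (by omega)

/-- L3 auxiliary: increasing direction. -/
theorem reach_of_between_aux {W : Finset (Fin n)} :
    ∀ (k : ℕ) (a b : Fin n), a.val + k = b.val →
      (∀ c : Fin n, a.val ≤ c.val → c.val ≤ b.val → c ∈ W) →
      ReachIn (pathGraph n) W a b := by
  intro k
  induction k with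
  | zero =>
    intro a b hab _
    have : a = b := Fin.ext (by omega)
    exact this ▸ Relation.ReflTransGen.refl
  | succ k ih =>
    intro a b hab hW
    have ha1 : a.val + 1 < n := by omega
    refine Relation.ReflTransGen.head (b := ⟨a.val + 1, ha1⟩)
      ⟨pathGraph_adj.mpr (Or.inl rfl), hW a le_rfl (by omega),
        hW ⟨a.val + 1, ha1⟩ (Nat.le_succ a.val) (show a.val + 1 ≤ b.val by omega)⟩ ?_
    exact ih ⟨a.val + 1, ha1⟩ b (show a.val + 1 + k = b.val by omega)
      (fun c h1 h2 => hW c (le_trans (Nat.le_succ a.val) h1) h2)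

/-- L3 : if every vertex between a and b lies in W then a reaches b in W. -/
theorem reach_of_between {W : Finset (Fin n)} {a b : Fin n}
    (hW : ∀ c : Fin n, (a.val ≤ c.val ∧ c.val ≤ b.val) ∨ (b.val ≤ c.val ∧ c.val ≤ a.val) →
      c ∈ W) : ReachIn (pathGraph n) W a b := by
  rcases le_total a.val b.val with h | h
  · exact reach_of_between_aux (b.val - a.val) a b (by omega)
      (fun c h1 h2 => hW c (Or.inl ⟨h1, h2⟩))
  · exact reach_symm (reach_of_between_aux (a.val - b.val) b a (by omega)
      (fun c h1 h2 => hW c (Or.inr ⟨h1, h2⟩)))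

/-- L2 : a reach chain stays inside a set closed under adjacency steps. -/
theorem reach_filter {p : Fin n → Prop} [DecidablePred p]
    (hp : ∀ x y : Fin n, (pathGraph n).Adj x y → x ∈ U → y ∈ U → p x → p y)
    {a b : Fin n} (ha : p a) (h : ReachIn (pathGraph n) U a b) :
    ReachIn (pathGraph n) (U.filter p) a b ∧ p b := by
  induction h with
  | refl => exact ⟨Relation.ReflTransGen.refl, ha⟩
  | @tail b b' hab step ih =>
    have hpb' : p b' := hp b b' step.1 step.2.1 step.2.2 ih.2
    exact ⟨ih.1.tail ⟨step.1, Finset.mem_filter.mpr ⟨step.2.1, ih.2⟩,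
      Finset.mem_filter.mpr ⟨step.2.2, hpb'⟩⟩, hpb'⟩

end Aux

theorem stmt_4 (n : ℕ) (hn : 1 ≤ n) (J₀ : Finset (Fin n))
    (U : CrossSection (pathGraph n) J₀) (hU : U.1.Nonempty) :
    SupIrred U ↔
      ((∃ β : Fin n, β ∉ J₀ ∧ U.1 = {β}) ∨
       (∃ (β : Fin n) (A : Finset (Fin n)), β ∉ J₀ ∧ A ⊆ J₀ ∧ A.Nonempty ∧
          ConnIn (pathGraph n) A ∧ (∃ α ∈ A, (pathGraph n).Adj α β) ∧
          U.1 = A ∪ {β})) := by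
  classical
  constructor
  · -- forward direction
    intro hirr
    have helper : ∀ B C : Finset (Fin n), Admissible (pathGraph n) J₀ B →
        Admissible (pathGraph n) J₀ C → B ∪ C = U.1 → B = U.1 ∨ C = U.1 := by
      intro B C hB hC hBC
      let B' : CrossSection (pathGraph n) J₀ := ⟨B, hB⟩
      let C' : CrossSection (pathGraph n) J₀ := ⟨C, hC⟩
      have hsup : B' ⊔ C' = U := Subtype.ext hBC
      rcases hirr.2 hsup with h | h
      · exact Or.inl (congrArg Subtype.val h)
      · exact Or.inr (congrArg Subtype.val h)
    -- U is an interval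
    have hint : ∀ a ∈ U.1, ∀ b ∈ U.1, ∀ c : Fin n,
        a.val ≤ c.val → c.val ≤ b.val → c ∈ U.1 := by
      intro a ha b hb c h1 h2
      by_contra hc
      have hac : a.val ≠ c.val := fun h => hc ((Fin.ext h : a = c) ▸ ha)
      have hbc : b.val ≠ c.val := fun h => hc ((Fin.ext h : b = c) ▸ hb)
      have hBadm : Admissible (pathGraph n) J₀ (U.1.filter (fun z => z.val < c.val)) := by
        intro x hx
        obtain ⟨hxU, hxc⟩ := Finset.mem_filter.mp hx
        obtain ⟨y, hry, hyJ⟩ := U.2 x hxU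
        have hstep : ∀ u v : Fin n, (pathGraph n).Adj u v → u ∈ U.1 → v ∈ U.1 →
            u.val < c.val → v.val < c.val := by
          intro u v huv hu hv h1
          have hadj := pathGraph_adj.mp huv
          have : v.val ≠ c.val := fun h => hc ((Fin.ext h : v = c) ▸ hv)
          omega
        obtain ⟨hr', _⟩ := reach_filter hstep hxc hry
        exact ⟨y, hr', hyJ⟩
      have hCadm : Admissible (pathGraph n) J₀ (U.1.filter (fun z => c.val < z.val)) := by
        intro x hx
        obtain ⟨hxU, hxc⟩ := Finset.mem_filter.mp hx
        obtain ⟨y, hry, hyJ⟩ := U.2 x hxU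
        have hstep : ∀ u v : Fin n, (pathGraph n).Adj u v → u ∈ U.1 → v ∈ U.1 →
            c.val < u.val → c.val < v.val := by
          intro u v huv hu hv h1
          have hadj := pathGraph_adj.mp huv
          have : v.val ≠ c.val := fun h => hc ((Fin.ext h : v = c) ▸ hv)
          omega
        obtain ⟨hr', _⟩ := reach_filter hstep hxc hry
        exact ⟨y, hr', hyJ⟩
      have huni : (U.1.filter (fun z => z.val < c.val)) ∪
          (U.1.filter (fun z => c.val < z.val)) = U.1 := by
        ext x
        simp only [Finset.mem_union, Finset.mem_filter]
        constructor
        · rintro (⟨h, _⟩ | ⟨h, _⟩) <;> exact h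
        · intro hx
          have : x.val ≠ c.val := fun h => hc ((Fin.ext h : x = c) ▸ hx)
          rcases Nat.lt_or_ge x.val c.val with h | h
          · exact Or.inl ⟨hx, h⟩
          · exact Or.inr ⟨hx, by omega⟩
      rcases helper _ _ hBadm hCadm huni with h | h
      · have : b ∈ U.1.filter (fun z => z.val < c.val) := by rw [h]; exact hb
        have := (Finset.mem_filter.mp this).2
        omega
      · have : a ∈ U.1.filter (fun z => c.val < z.val) := by rw [h]; exact ha
        have := (Finset.mem_filter.mp this).2
        omega
    -- pick the non-J₀ vertex
    obtain ⟨a, haU⟩ := hU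
    obtain ⟨β, hrβ, hβJ⟩ := U.2 a haU
    have hβU : β ∈ U.1 := reach_mem haU hrβ
    -- split lemma at a non-J₀ vertex
    have split : ∀ x y : Fin n, x ∈ U.1 → y ∈ U.1 → x ∉ J₀ → y ∉ J₀ →
        x.val < y.val → False := by
      intro x y hx hy hxJ hyJ hlt
      have hBadm : Admissible (pathGraph n) J₀ (U.1.filter (fun z => z.val ≤ x.val)) := by
        intro z hz
        obtain ⟨hzU, hzx⟩ := Finset.mem_filter.mp hz
        refine ⟨x, ?_, hxJ⟩
        apply reach_of_between
        intro cc hcc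
        rcases hcc with ⟨h1, h2⟩ | ⟨h1, h2⟩
        · exact Finset.mem_filter.mpr ⟨hint z hzU x hx cc h1 h2, h2⟩
        · have hccx : cc = x := Fin.ext (by omega)
          rw [hccx]
          exact Finset.mem_filter.mpr ⟨hx, le_rfl⟩
      have hCadm : Admissible (pathGraph n) J₀ (U.1.filter (fun z => x.val < z.val)) := by
        intro z hz
        obtain ⟨hzU, hzx⟩ := Finset.mem_filter.mp hz
        refine ⟨y, ?_, hyJ⟩
        apply reach_of_between
        intro cc hcc
        rcases hcc with ⟨h1, h2⟩ | ⟨h1, h2⟩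
        · exact Finset.mem_filter.mpr ⟨hint z hzU y hy cc h1 h2, by omega⟩
        · exact Finset.mem_filter.mpr ⟨hint y hy z hzU cc h1 h2, by omega⟩
      have huni : (U.1.filter (fun z => z.val ≤ x.val)) ∪
          (U.1.filter (fun z => x.val < z.val)) = U.1 := by
        ext w
        simp only [Finset.mem_union, Finset.mem_filter]
        constructor
        · rintro (⟨h, _⟩ | ⟨h, _⟩) <;> exact h
        · intro hw
          rcases le_or_gt w.val x.val with h | h
          · exact Or.inl ⟨hw, h⟩
          · exact Or.inr ⟨hw, h⟩
      rcases helper _ _ hBadm hCadm huni with h | h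
      · have : y ∈ U.1.filter (fun z => z.val ≤ x.val) := by rw [h]; exact hy
        have := (Finset.mem_filter.mp this).2
        omega
      · have : x ∈ U.1.filter (fun z => x.val < z.val) := by rw [h]; exact hx
        have := (Finset.mem_filter.mp this).2
        omega
    have huniq : ∀ γ ∈ U.1, γ ∉ J₀ → γ = β := by
      intro γ hγ hγJ
      by_contra hne
      have : γ.val ≠ β.val := fun h => hne (Fin.ext h)
      rcases Nat.lt_or_ge γ.val β.val with h | h
      · exact split γ β hγ hβU hγJ hβJ h
      · exact split β γ hβU hγ hβJ hγJ (by omega)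
    -- β is an endpoint
    have hend : (∀ z ∈ U.1, z.val ≤ β.val) ∨ (∀ z ∈ U.1, β.val ≤ z.val) := by
      by_contra hcon
      push_neg at hcon
      obtain ⟨⟨r, hrU, hrβ'⟩, ⟨l, hlU, hlβ'⟩⟩ := hcon
      have hBadm : Admissible (pathGraph n) J₀ (U.1.filter (fun z => z.val ≤ β.val)) := by
        intro z hz
        obtain ⟨hzU, hzβ⟩ := Finset.mem_filter.mp hz
        refine ⟨β, ?_, hβJ⟩
        apply reach_of_between
        intro cc hcc
        rcases hcc with ⟨h1, h2⟩ | ⟨h1, h2⟩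
        · exact Finset.mem_filter.mpr ⟨hint z hzU β hβU cc h1 h2, h2⟩
        · have hccβ : cc = β := Fin.ext (by omega)
          rw [hccβ]
          exact Finset.mem_filter.mpr ⟨hβU, le_rfl⟩
      have hCadm : Admissible (pathGraph n) J₀ (U.1.filter (fun z => β.val ≤ z.val)) := by
        intro z hz
        obtain ⟨hzU, hzβ⟩ := Finset.mem_filter.mp hz
        refine ⟨β, ?_, hβJ⟩
        apply reach_of_between
        intro cc hcc
        rcases hcc with ⟨h1, h2⟩ | ⟨h1, h2⟩
        · have hccβ : cc = β := Fin.ext (by omega)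
          rw [hccβ]
          exact Finset.mem_filter.mpr ⟨hβU, le_rfl⟩
        · exact Finset.mem_filter.mpr ⟨hint β hβU z hzU cc h1 h2, h1⟩
      have huni : (U.1.filter (fun z => z.val ≤ β.val)) ∪
          (U.1.filter (fun z => β.val ≤ z.val)) = U.1 := by
        ext w
        simp only [Finset.mem_union, Finset.mem_filter]
        constructor
        · rintro (⟨h, _⟩ | ⟨h, _⟩) <;> exact h
        · intro hw
          rcases le_or_gt w.val β.val with h | h
          · exact Or.inl ⟨hw, h⟩
          · exact Or.inr ⟨hw, by omega⟩
      rcases helper _ _ hBadm hCadm huni with h | h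
      · have : r ∈ U.1.filter (fun z => z.val ≤ β.val) := by rw [h]; exact hrU
        have := (Finset.mem_filter.mp this).2
        omega
      · have : l ∈ U.1.filter (fun z => β.val ≤ z.val) := by rw [h]; exact hlU
        have := (Finset.mem_filter.mp this).2
        omega
    by_cases hAe : U.1.erase β = ∅
    · -- singleton case
      left
      refine ⟨β, hβJ, ?_⟩
      apply Finset.Subset.antisymm
      · intro x hx
        rw [Finset.mem_singleton]
        by_contra hne
        have : x ∈ U.1.erase β := Finset.mem_erase.mpr ⟨hne, hx⟩
        rw [hAe] at this
        exact absurd this (Finset.notMem_empty x)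
      · exact Finset.singleton_subset_iff.mpr hβU
    · right
      have hAne : (U.1.erase β).Nonempty := Finset.nonempty_iff_ne_empty.mpr hAe
      have hAJ : U.1.erase β ⊆ J₀ := by
        intro z hz
        obtain ⟨hzne, hzU⟩ := Finset.mem_erase.mp hz
        by_contra hzJ
        exact hzne (huniq z hzU hzJ)
      have hUeq : U.1 = U.1.erase β ∪ {β} := by
        have h1 : (U.1.erase β) ∪ {β} = insert β (U.1.erase β) := by
          ext x
          simp [Finset.mem_union, Finset.mem_insert, or_comm]
        rw [h1, Finset.insert_erase hβU]
      rcases hend with hmax | hmin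
      · have hlt : ∀ z ∈ U.1.erase β, z.val < β.val := by
          intro z hz
          obtain ⟨hzne, hzU⟩ := Finset.mem_erase.mp hz
          have h1 := hmax z hzU
          have : z.val ≠ β.val := fun h => hzne (Fin.ext h)
          omega
        have hconn : ConnIn (pathGraph n) (U.1.erase β) := by
          intro a1 ha1 b1 hb1
          have ha1U := (Finset.mem_erase.mp ha1).2
          have hb1U := (Finset.mem_erase.mp hb1).2
          have ha1β := hlt a1 ha1
          have hb1β := hlt b1 hb1
          apply reach_of_between
          intro cc hcc
          have hccU : cc ∈ U.1 := by
            rcases hcc with ⟨h1, h2⟩ | ⟨h1, h2⟩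
            · exact hint a1 ha1U b1 hb1U cc h1 h2
            · exact hint b1 hb1U a1 ha1U cc h1 h2
          refine Finset.mem_erase.mpr ⟨?_, hccU⟩
          intro h
          have := congrArg Fin.val h
          rcases hcc with ⟨h1, h2⟩ | ⟨h1, h2⟩ <;> omega
        obtain ⟨a0, ha0⟩ := hAne
        have h0 : a0.val < β.val := hlt a0 ha0
        have ha0U := (Finset.mem_erase.mp ha0).2
        have hβn : β.val - 1 < n := by omega
        have hαU : (⟨β.val - 1, hβn⟩ : Fin n) ∈ U.1 :=
          hint a0 ha0U β hβU _ (show a0.val ≤ β.val - 1 by omega)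
            (show β.val - 1 ≤ β.val by omega)
        have hαA : (⟨β.val - 1, hβn⟩ : Fin n) ∈ U.1.erase β := by
          refine Finset.mem_erase.mpr ⟨?_, hαU⟩
          intro h
          have := congrArg Fin.val h
          simp only at this
          omega
        refine ⟨β, U.1.erase β, hβJ, hAJ, ⟨a0, ha0⟩, hconn,
          ⟨⟨β.val - 1, hβn⟩, hαA, pathGraph_adj.mpr
            (Or.inl (show β.val - 1 + 1 = β.val by omega))⟩, hUeq⟩
      · have hlt : ∀ z ∈ U.1.erase β, β.val < z.val := by
          intro z hz
          obtain ⟨hzne, hzU⟩ := Finset.mem_erase.mp hz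
          have h1 := hmin z hzU
          have : z.val ≠ β.val := fun h => hzne (Fin.ext h)
          omega
        have hconn : ConnIn (pathGraph n) (U.1.erase β) := by
          intro a1 ha1 b1 hb1
          have ha1U := (Finset.mem_erase.mp ha1).2
          have hb1U := (Finset.mem_erase.mp hb1).2
          have ha1β := hlt a1 ha1
          have hb1β := hlt b1 hb1
          apply reach_of_between
          intro cc hcc
          have hccU : cc ∈ U.1 := by
            rcases hcc with ⟨h1, h2⟩ | ⟨h1, h2⟩
            · exact hint a1 ha1U b1 hb1U cc h1 h2
            · exact hint b1 hb1U a1 ha1U cc h1 h2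
          refine Finset.mem_erase.mpr ⟨?_, hccU⟩
          intro h
          have := congrArg Fin.val h
          rcases hcc with ⟨h1, h2⟩ | ⟨h1, h2⟩ <;> omega
        obtain ⟨a0, ha0⟩ := hAne
        have h0 : β.val < a0.val := hlt a0 ha0
        have ha0U := (Finset.mem_erase.mp ha0).2
        have hβn : β.val + 1 < n := by
          have := a0.isLt
          omega
        have hαU : (⟨β.val + 1, hβn⟩ : Fin n) ∈ U.1 :=
          hint β hβU a0 ha0U _ (show β.val ≤ β.val + 1 by omega)
            (show β.val + 1 ≤ a0.val by omega)
        have hαA : (⟨β.val + 1, hβn⟩ : Fin n) ∈ U.1.erase β := by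
          refine Finset.mem_erase.mpr ⟨?_, hαU⟩
          intro h
          have := congrArg Fin.val h
          simp only at this
          omega
        refine ⟨β, U.1.erase β, hβJ, hAJ, ⟨a0, ha0⟩, hconn,
          ⟨⟨β.val + 1, hβn⟩, hαA, pathGraph_adj.mpr
            (Or.inr (show β.val + 1 = β.val + 1 from rfl))⟩, hUeq⟩
  · -- backward direction
    intro h
    constructor
    · intro hmin
      have hle : U ≤ (⊥ : CrossSection (pathGraph n) J₀) := hmin bot_le
      have hsub : U.1 ⊆ (∅ : Finset (Fin n)) := hle
      obtain ⟨x, hx⟩ := hU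
      exact absurd (hsub hx) (Finset.notMem_empty x)
    · intro B C hBC
      have hBCv : B.1 ∪ C.1 = U.1 := congrArg Subtype.val hBC
      have hBsub : B.1 ⊆ U.1 := by rw [← hBCv]; exact Finset.subset_union_left
      have hCsub : C.1 ⊆ U.1 := by rw [← hBCv]; exact Finset.subset_union_right
      rcases h with ⟨β, hβJ, hUs⟩ | ⟨β, A, hβJ, hAJ, hAne, hconn, ⟨α, hαA, hadj⟩, hUs⟩
      · -- singleton case
        have hβ : β ∈ B.1 ∪ C.1 := by rw [hBCv, hUs]; exact Finset.mem_singleton_self β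
        rcases Finset.mem_union.mp hβ with hb | hb
        · left
          refine Subtype.ext (Finset.Subset.antisymm hBsub ?_)
          rw [hUs]
          exact Finset.singleton_subset_iff.mpr hb
        · right
          refine Subtype.ext (Finset.Subset.antisymm hCsub ?_)
          rw [hUs]
          exact Finset.singleton_subset_iff.mpr hb
      · -- case (b)
        have hβA : β ∉ A := fun hh => hβJ (hAJ hh)
        have hAint : ∀ a ∈ A, ∀ b ∈ A, ∀ c : Fin n,
            (a.val ≤ c.val ∧ c.val ≤ b.val) ∨ (b.val ≤ c.val ∧ c.val ≤ a.val) → c ∈ A :=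
          fun a ha b hb c hc => reach_between ha (hconn a ha b hb) c hc
        have hadj' := pathGraph_adj.mp hadj
        have hβuniq : ∀ z ∈ U.1, z ∉ J₀ → z = β := by
          intro z hz hzJ
          rw [hUs] at hz
          rcases Finset.mem_union.mp hz with hz | hz
          · exact absurd (hAJ hz) hzJ
          · exact Finset.mem_singleton.mp hz
        obtain ⟨e, heA, hbet⟩ : ∃ e ∈ A, ∀ z ∈ U.1,
            (e.val ≤ z.val ∧ z.val ≤ β.val) ∨ (β.val ≤ z.val ∧ z.val ≤ e.val) := by
          rcases hadj' with h1 | h1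
          · -- α.val + 1 = β.val : A lies below β
            have hAlt : ∀ z ∈ A, z.val < β.val := by
              intro z hz
              rcases lt_trichotomy z.val β.val with hh | hh | hh
              · exact hh
              · exact absurd ((Fin.ext hh : z = β) ▸ hz) hβA
              · exact absurd (hAint α hαA z hz β (Or.inl ⟨by omega, by omega⟩)) hβA
            refine ⟨A.min' hAne, A.min'_mem hAne, ?_⟩
            intro z hz
            rw [hUs] at hz
            rcases Finset.mem_union.mp hz with hz | hz
            · exact Or.inl ⟨Fin.le_def.mp (A.min'_le z hz), (hAlt z hz).le⟩
            · rw [Finset.mem_singleton.mp hz]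
              exact Or.inl ⟨(hAlt _ (A.min'_mem hAne)).le, le_rfl⟩
          · -- β.val + 1 = α.val : A lies above β
            have hAgt : ∀ z ∈ A, β.val < z.val := by
              intro z hz
              rcases lt_trichotomy β.val z.val with hh | hh | hh
              · exact hh
              · exact absurd ((Fin.ext hh : β = z) ▸ hz) hβA
              · exact absurd (hAint z hz α hαA β (Or.inl ⟨by omega, by omega⟩)) hβA
            refine ⟨A.max' hAne, A.max'_mem hAne, ?_⟩
            intro z hz
            rw [hUs] at hz
            rcases Finset.mem_union.mp hz with hz | hz
            · exact Or.inr ⟨(hAgt z hz).le, Fin.le_def.mp (A.le_max' z hz)⟩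
            · rw [Finset.mem_singleton.mp hz]
              exact Or.inr ⟨le_rfl, (hAgt _ (A.max'_mem hAne)).le⟩
        have key : ∀ D : CrossSection (pathGraph n) J₀, D.1 ⊆ U.1 → e ∈ D.1 →
            U.1 ⊆ D.1 := by
          intro D hDsub heD
          obtain ⟨b, hrb, hbJ⟩ := D.2 e heD
          have hbD : b ∈ D.1 := reach_mem heD hrb
          have hbβ : b = β := hβuniq b (hDsub hbD) hbJ
          rw [hbβ] at hrb
          intro x hx
          exact reach_between heD hrb x (hbet x hx)
        have heU : e ∈ U.1 := by rw [hUs]; exact Finset.mem_union_left _ heA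
        have he' : e ∈ B.1 ∪ C.1 := by rw [hBCv]; exact heU
        rcases Finset.mem_union.mp he' with hh | hh
        · exact Or.inl (Subtype.ext (Finset.Subset.antisymm hBsub (key B hBsub hh)))
        · exact Or.inr (Subtype.ext (Finset.Subset.antisymm hCsub (key C hCsub hh)))
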